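/- (Commutation r₅r₃₄ = r₃₄r₅.) Let t₁, t₂, θ₁, θ₂, κ₀, κ₁, κ∞, q₁, q₂, p₁, p₂ ∈ ℂ with t₁, t₂ ≠ 0. Set α = −(θ₁+θ₂+κ₀+κ₁+κ∞−1)/2 and S = q₁p₁+q₂p₂, and assume S+α ≠ 0, S+α+κ∞ ≠ 0, p₁ ≠ 0, p₂ ≠ 0, q₁p₁ ≠ θ₁, q₂p₂ ≠ θ₂. Define r₅ by κ∞ ↦ −κ∞, with all other parameters and all variables fixed; define r₃₄ by (θ₁,θ₂,κ₀,κ₁,κ∞) ↦ (−θ₁,−θ₂,1−κ₀,1−κ₁,−κ∞), q_i ↦ Q_i := t_i p_i (q_ip_i−θ_i)/((S+α)(S+α+κ∞)), p_i ↦ P_i := −q_ip_i/Q_i for i = 1,2. Then the composite transformations r₅∘r₃₄ and r₃₄∘r₅ (each computed with the appropriately transformed parameters and variables) give the same result on the parameters (θ₁,θ₂,κ₀,κ₁,κ∞) and on the variables (q₁,q₂,p₁,p₂). -/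
import Mathlib


/-- Commutation r₅r₃₄ = r₃₄r₅ for the birational canonical transformations of
the Garnier system in two variables: the composite computed by applying r₃₄
first and then r₅ (path A) agrees with the composite computed by applying r₅
first and then r₃₄ (path B), both on the parameters (θ₁,θ₂,κ₀,κ₁,κ∞) and on
the canonical variables (q₁,q₂,p₁,p₂). Here `κi` denotes κ∞; note that
α = −(θ₁+θ₂+κ₀+κ₁+κ∞−1)/2 depends on κ∞. -/
theorem stmt_14 (t1 t2 θ1 θ2 κ0 κ1 κi q1 q2 p1 p2 : ℂ)
    (ht1 : t1 ≠ 0) (ht2 : t2 ≠ 0)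
    (α S : ℂ)
    (hα : α = -(θ1 + θ2 + κ0 + κ1 + κi - 1) / 2)
    (hS : S = q1 * p1 + q2 * p2)
    (hSα : S + α ≠ 0) (hSκ : S + α + κi ≠ 0)
    (hp1 : p1 ≠ 0) (hp2 : p2 ≠ 0)
    (hq1p1 : q1 * p1 ≠ θ1) (hq2p2 : q2 * p2 ≠ θ2)
    -- Path A: apply r₃₄ first, then r₅ (which fixes the variables and negates
    -- the current κ∞-parameter −κ∞, giving back κ∞)
    (QA1 QA2 PA1 PA2 : ℂ)
    (hQA1 : QA1 = t1 * p1 * (q1 * p1 - θ1) / ((S + α) * (S + α + κi)))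
    (hQA2 : QA2 = t2 * p2 * (q2 * p2 - θ2) / ((S + α) * (S + α + κi)))
    (hPA1 : PA1 = -(q1 * p1) / QA1) (hPA2 : PA2 = -(q2 * p2) / QA2)
    -- Path B: apply r₅ first (κ∞ ↦ −κ∞, variables fixed), then r₃₄ with the
    -- transformed parameters (θ₁,θ₂,κ₀,κ₁,−κ∞)
    (αB : ℂ)
    (hαB : αB = -(θ1 + θ2 + κ0 + κ1 + (-κi) - 1) / 2)
    (QB1 QB2 PB1 PB2 : ℂ)
    (hQB1 : QB1 = t1 * p1 * (q1 * p1 - θ1) / ((S + αB) * (S + αB + (-κi))))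
    (hQB2 : QB2 = t2 * p2 * (q2 * p2 - θ2) / ((S + αB) * (S + αB + (-κi))))
    (hPB1 : PB1 = -(q1 * p1) / QB1) (hPB2 : PB2 = -(q2 * p2) / QB2) :
    -- the two composites give the same parameters
    (((-θ1), (-θ2), (1 - κ0), (1 - κ1), (-(-κi)))
        = (((-θ1) : ℂ), ((-θ2) : ℂ), ((1 - κ0) : ℂ), ((1 - κ1) : ℂ),
            ((-(-κi)) : ℂ)))
    -- and the same variables (q₁,q₂,p₁,p₂)
    ∧ QA1 = QB1 ∧ QA2 = QB2 ∧ PA1 = PB1 ∧ PA2 = PB2 := by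
  have hB : αB = α + κi := by rw [hα, hαB]; ring
  have hd : (S + αB) * (S + αB + (-κi)) = (S + α) * (S + α + κi) := by
    rw [hB]; ring
  have h1 : QA1 = QB1 := by rw [hQA1, hQB1, hd]
  have h2 : QA2 = QB2 := by rw [hQA2, hQB2, hd]
  exact ⟨rfl, h1, h2, by rw [hPA1, hPB1, h1], by rw [hPA2, hPB2, h2]⟩
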